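/- There exists a resolvable (5K_8, K_4−e)-design: the edge multiset of 5K_8 can be decomposed into copies of K_4−e grouped into 14 parallel classes, each class consisting of two vertex-disjoint copies of K_4−e covering all 8 vertices. -/
import Mathlib


/-- The multiset of edges of a simple graph on `Fin m`. -/
noncomputable def edgeMultiset {m : ℕ} (H : SimpleGraph (Fin m)) : Multiset (Sym2 (Fin m)) :=
  (Set.toFinite H.edgeSet).toFinset.val

/-- The number of edges of a simple graph on `Fin m`. -/
noncomputable def edgeCount {m : ℕ} (H : SimpleGraph (Fin m)) : ℕ := (edgeMultiset H).card

/-- The multiset of edges of the copy of `G` given by the embedding `f`. -/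
noncomputable def blockEdges {n v : ℕ} (G : SimpleGraph (Fin n)) (f : Fin n ↪ Fin v) :
    Multiset (Sym2 (Fin v)) :=
  (edgeMultiset G).map (Sym2.map ⇑f)

/-- `classes` is a resolvable decomposition of the multigraph `lam • H` into copies
of `G`: each parallel class covers every vertex exactly once, and the edges of all
blocks, counted with multiplicity, are exactly the edges of `H` taken `lam` times. -/
def IsResolvableDecomp {n v : ℕ} (lam : ℕ) (G : SimpleGraph (Fin n))
    (H : SimpleGraph (Fin v))
    (classes : Multiset (Multiset (Fin n ↪ Fin v))) : Prop :=
  (∀ P ∈ classes, P.bind (fun f => Multiset.map ⇑f Finset.univ.val) =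
      (Finset.univ : Finset (Fin v)).val) ∧
  (classes.bind id).bind (fun f => blockEdges G f) = lam • edgeMultiset H

/-- A resolvable `(λ K_v, G)`-design. -/
def IsResolvableDesign {n : ℕ} (lam v : ℕ) (G : SimpleGraph (Fin n))
    (classes : Multiset (Multiset (Fin n ↪ Fin v))) : Prop :=
  IsResolvableDecomp lam G (⊤ : SimpleGraph (Fin v)) classes

/-- The 4-cycle `C₄`. -/
def cycle4 : SimpleGraph (Fin 4) :=
  SimpleGraph.fromRel (fun a b => (a.val, b.val) ∈ [(0,1),(1,2),(2,3),(3,0)])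

/-- The kite `K₃ + e` (triangle `0,1,2` with pendant edge `{2,3}`). -/
def kite : SimpleGraph (Fin 4) :=
  SimpleGraph.fromRel (fun a b => (a.val, b.val) ∈ [(0,1),(0,2),(1,2),(2,3)])

/-- The 3-star `K_{1,3}` with center `0`. -/
def star3 : SimpleGraph (Fin 4) :=
  SimpleGraph.fromRel (fun a b => (a.val, b.val) ∈ [(0,1),(0,2),(0,3)])

/-- The graph `K₄ - e` (missing the edge `{2,3}`). -/
def k4e : SimpleGraph (Fin 4) :=
  SimpleGraph.fromRel (fun a b => (a.val, b.val) ∈ [(0,1),(0,2),(1,2),(0,3),(1,3)])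


def emb (a b c d : Fin 8) (h : Function.Injective ![a,b,c,d]) : Fin 4 ↪ Fin 8 :=
  ⟨![a,b,c,d], h⟩

instance k4eDec : DecidableRel k4e.Adj := fun a b => by
  unfold k4e SimpleGraph.fromRel
  exact inferInstanceAs (Decidable (_ ∧ _))

lemma edgeMultiset_eq {m : ℕ} (H : SimpleGraph (Fin m)) [DecidableRel H.Adj] :
    edgeMultiset H = H.edgeFinset.val := by
  unfold edgeMultiset
  rw [Set.Finite.toFinset_eq_toFinset]
  try rfl

def myClasses : Multiset (Multiset (Fin 4 ↪ Fin 8)) :=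
  { {emb 7 4 5 0 (by decide), emb 1 2 3 6 (by decide)},
    {emb 0 3 7 2 (by decide), emb 1 6 5 4 (by decide)},
    {emb 7 5 6 1 (by decide), emb 2 3 4 0 (by decide)},
    {emb 1 4 7 3 (by decide), emb 2 0 6 5 (by decide)},
    {emb 7 6 0 2 (by decide), emb 3 4 5 1 (by decide)},
    {emb 2 5 7 4 (by decide), emb 3 1 0 6 (by decide)},
    {emb 7 0 1 3 (by decide), emb 4 5 6 2 (by decide)},
    {emb 3 6 7 5 (by decide), emb 4 2 1 0 (by decide)},
    {emb 7 1 2 4 (by decide), emb 5 6 0 3 (by decide)},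
    {emb 4 0 7 6 (by decide), emb 5 3 2 1 (by decide)},
    {emb 7 2 3 5 (by decide), emb 6 0 1 4 (by decide)},
    {emb 5 1 7 0 (by decide), emb 6 4 3 2 (by decide)},
    {emb 7 3 4 6 (by decide), emb 0 1 2 5 (by decide)},
    {emb 6 2 7 1 (by decide), emb 0 5 4 3 (by decide)} }

theorem stmt10 :
    ∃ classes : Multiset (Multiset (Fin 4 ↪ Fin 8)),
      IsResolvableDesign 5 8 k4e classes ∧
      Multiset.card classes = 14 ∧
      ∀ P ∈ classes, Multiset.card P = 2 := by
  refine ⟨myClasses, ⟨?_, ?_⟩, by decide, by decide⟩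
  · decide
  · show (myClasses.bind id).bind (fun f => blockEdges k4e f) = 5 • edgeMultiset (⊤ : SimpleGraph (Fin 8))
    simp only [blockEdges, edgeMultiset_eq]
    decide
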